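/- If N is a finite p-group on which a finite abelian p'-group H acts (i.e., H has order coprime to p), then there exists n₀ ∈ N such that the centralizer of n₀ in H equals the kernel of the action of H on N, i.e., C_H(n₀) = C_H(N). -/

import Mathlib

section Helpers
universe u v

private lemma smul_mem_center {H : Type v} [Group H] {N : Type u} [Group N]
    [MulDistribMulAction H N] (h : H) {c : N} (hc : c ∈ Subgroup.center N) :
    h • c ∈ Subgroup.center N := by
  rw [Subgroup.mem_center_iff] at hc ⊢
  intro g
  have hg : h • (h⁻¹ • g) = g := by rw [← mul_smul, mul_inv_cancel, one_smul]
  calc g * h • c = h • (h⁻¹ • g) * h • c := by rw [hg]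
    _ = h • ((h⁻¹ • g) * c) := (smul_mul' _ _ _).symm
    _ = h • (c * (h⁻¹ • g)) := by rw [hc _]
    _ = h • c * g := by rw [smul_mul', hg]

private lemma engine {p : ℕ} (hp : p.Prime) {H : Type v} [CommGroup H] [Finite H]
    (hH : Nat.Coprime (Nat.card H) p)
    {N : Type u} [Group N] [Finite N] (hN : IsPGroup p N) [MulDistribMulAction H N]
    (Z : Subgroup N) (hZc : Z ≤ Subgroup.center N) (hZp : ∀ z ∈ Z, z ^ p = 1)
    (hZinv : ∀ (h : H), ∀ z ∈ Z, h • z ∈ Z) (hZbot : Z ≠ ⊥) (hZtop : Z ≠ ⊤)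
    (IH : ∀ (N' : Type u) [Group N'] [Finite N'] [MulDistribMulAction H N'],
      IsPGroup p N' → Nat.card N' < Nat.card N →
      ∃ n₀ : N', ∀ h : H, h • n₀ = n₀ ↔ ∀ n : N', h • n = n) :
    ∃ n₀ : N, ∀ h : H, h • n₀ = n₀ ↔ ∀ n : N, h • n = n := by
  classical
  haveI hZnormal : Z.Normal := by
    refine ⟨fun z hz g => ?_⟩
    have hcz := Subgroup.mem_center_iff.mp (hZc hz)
    rw [hcz g, mul_inv_cancel_right]
    exact hz
  -- quotient action
  letI actQ : MulDistribMulAction H (N ⧸ Z) :=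
    { smul := fun h => QuotientGroup.map Z Z (MulDistribMulAction.toMonoidHom N h)
        (fun z hz => by
          simpa using hZinv h z hz)
      one_smul := fun x => QuotientGroup.induction_on x fun n => by
        show QuotientGroup.map Z Z _ _ _ = _
        rw [QuotientGroup.map_mk]
        simp
      mul_smul := fun a b x => QuotientGroup.induction_on x fun n => by
        show QuotientGroup.map Z Z _ _ _ =
          QuotientGroup.map Z Z _ _ (QuotientGroup.map Z Z _ _ _)
        rw [QuotientGroup.map_mk, QuotientGroup.map_mk, QuotientGroup.map_mk]
        simp [mul_smul]
      smul_mul := fun h x y => map_mul _ x y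
      smul_one := fun h => map_one _ }
  have hact : ∀ (h : H) (n : N), h • ((n : N ⧸ Z)) = ((h • n : N) : N ⧸ Z) := by
    intro h n
    show QuotientGroup.map Z Z _ _ _ = _
    rw [QuotientGroup.map_mk]
    simp
  -- cards
  have hcards := Subgroup.card_eq_card_quotient_mul_card_subgroup Z
  have hposN : 0 < Nat.card N := Nat.card_pos
  have hposQ : 0 < Nat.card (N ⧸ Z) := Nat.card_pos
  have hposZ : 0 < Nat.card Z := Nat.card_pos
  have hZ2 : 2 ≤ Nat.card Z := by
    by_contra hq
    have hq1 : Nat.card Z = 1 := by omega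
    refine hZbot ?_
    have hsub : Subsingleton Z := (Nat.card_eq_one_iff_unique.mp hq1).1
    ext x
    simp only [Subgroup.mem_bot]
    constructor
    · intro hx
      exact congrArg Subtype.val (Subsingleton.elim (⟨x, hx⟩ : Z) ⟨1, Z.one_mem⟩)
    · rintro rfl; exact Z.one_mem
  have hQ2 : 2 ≤ Nat.card (N ⧸ Z) := by
    by_contra hq
    have hq1 : Nat.card (N ⧸ Z) = 1 := by omega
    refine hZtop ?_
    have hsub : Subsingleton (N ⧸ Z) := (Nat.card_eq_one_iff_unique.mp hq1).1
    ext n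
    simp only [Subgroup.mem_top, iff_true]
    have : (n : N ⧸ Z) = ((1 : N) : N ⧸ Z) := Subsingleton.elim _ _
    simpa using (QuotientGroup.eq_one_iff n).mp (by simpa using this)
  have hQlt : Nat.card (N ⧸ Z) < Nat.card N := by nlinarith
  have hZlt : Nat.card Z < Nat.card N := by nlinarith
  -- element for the quotient
  obtain ⟨xb, hxb⟩ := IH (N ⧸ Z) (hN.to_quotient Z) hQlt
  -- the subgroup S of elements acting trivially on the quotient
  let S : Subgroup H :=
    { carrier := {h | ∀ m : N ⧸ Z, h • m = m}
      one_mem' := fun m => one_smul H m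
      mul_mem' := fun {a b} ha hb m => by rw [mul_smul, hb, ha]
      inv_mem' := fun {a} ha m => by
        have := ha (a⁻¹ • m)
        rw [← mul_smul, mul_inv_cancel, one_smul] at this
        exact this.symm }
  have hSmem : ∀ h : H, h ∈ S ↔ ∀ m : N ⧸ Z, h • m = m := fun _ => Iff.rfl
  obtain ⟨x', hx'⟩ := QuotientGroup.mk_surjective xb
  set μ : H → N := fun h => x'⁻¹ * (h • x') with hμdef
  have hμZ : ∀ h ∈ S, μ h ∈ Z := by
    intro h hS
    have h1 : ((x' : N ⧸ Z)) = ((h • x' : N) : N ⧸ Z) := by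
      rw [← hact h x', hx']
      exact ((hxb h).mpr ((hSmem h).mp hS)).symm
    exact QuotientGroup.eq.mp h1
  haveI : Fintype H := Fintype.ofFinite H
  haveI : Fintype S := Fintype.ofFinite S
  set C := Subgroup.center N with hCdef
  letI : CommGroup C := { (inferInstance : Group C) with
    mul_comm := fun a b => Subtype.ext ((Subgroup.mem_center_iff.mp b.2) a) }
  -- ν : cocycle with values in the (commutative) center
  have hνmem : ∀ t : S, μ (t : H) ∈ C := fun t => hZc (hμZ _ t.2)
  set ν : S → C := fun t => ⟨μ (t : H), hνmem t⟩ with hνdef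
  -- action of S on the center as monoid homs
  set ψ : S → (C →* C) := fun s =>
    { toFun := fun c => ⟨(s : H) • (c : N), smul_mem_center _ c.2⟩
      map_one' := by ext; simp
      map_mul' := fun a b => by ext; simp [smul_mul'] } with hψdef
  have hcocycle : ∀ s t : S, ν (s * t) = ν s * ψ s (ν t) := by
    intro s t
    ext
    show μ ((s : H) * t) = μ (s : H) * ((s : H) • μ (t : H))
    simp only [hμdef, mul_smul, smul_mul', smul_inv']
    group
  set B : C := ∏ t : S, ν t with hBdef
  set q : ℕ := Fintype.card S with hqdef
  have key1 : ∀ s : S, ν s ^ q = B * (ψ s B)⁻¹ := by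
    intro s
    have h1 : ∏ t : S, ν (s * t) = B := Fintype.prod_equiv (Equiv.mulLeft s) _ _ (fun t => rfl)
    have h2 : ∏ t : S, ν (s * t) = ν s ^ q * ψ s B := by
      calc ∏ t : S, ν (s * t) = ∏ t : S, (ν s * ψ s (ν t)) := by
            simp_rw [hcocycle s]
        _ = (∏ _t : S, ν s) * ∏ t : S, ψ s (ν t) := Finset.prod_mul_distrib
        _ = ν s ^ q * ψ s B := by rw [Finset.prod_const, Finset.card_univ, hBdef, map_prod]
    rw [h1] at h2
    exact eq_mul_inv_of_mul_eq h2.symm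
  have hqco : Nat.Coprime q p := by
    have hdvd : Nat.card S ∣ Nat.card H := Subgroup.card_subgroup_dvd_card S
    rw [hqdef, ← Nat.card_eq_fintype_card]
    exact Nat.Coprime.coprime_dvd_left hdvd hH
  obtain ⟨k, -, hk⟩ := Nat.exists_mul_mod_eq_one_of_coprime hqco hp.one_lt
  set c : C := B ^ k with hcdef
  -- membership of c in Z
  set Zc : Subgroup C :=
    { carrier := {z | (z : N) ∈ Z}
      one_mem' := Z.one_mem
      mul_mem' := fun {a b} ha hb => Z.mul_mem ha hb
      inv_mem' := fun {a} ha => Z.inv_mem ha } with hZcdef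
  have hBZ : B ∈ Zc := Subgroup.prod_mem Zc (fun t _ => hμZ _ t.2)
  have hcZ : (c : N) ∈ Z := Zc.pow_mem hBZ k
  have hνpow : ∀ s : S, ν s ^ p = 1 := by
    intro s
    ext
    show μ (s : H) ^ p = 1
    exact hZp _ (hμZ _ s.2)
  have key2 : ∀ s : S, ν s = c * (ψ s c)⁻¹ := by
    intro s
    calc ν s = ν s ^ 1 := (pow_one _).symm
      _ = ν s ^ (q * k % p) := by rw [hk]
      _ = ν s ^ (q * k) := (pow_eq_pow_mod _ (hνpow s)).symm
      _ = (ν s ^ q) ^ k := by rw [pow_mul]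
      _ = (B * (ψ s B)⁻¹) ^ k := by rw [key1 s]
      _ = B ^ k * ((ψ s B) ^ k)⁻¹ := by rw [mul_pow, inv_pow]
      _ = c * (ψ s c)⁻¹ := by rw [hcdef, map_pow]
  -- the lifted fixed element
  set x₀ : N := x' * (c : N) with hx₀def
  have hμs : ∀ h : H, h • x' = x' * μ h := fun h => (mul_inv_cancel_left _ _).symm
  have hx₀fix : ∀ s : S, (s : H) • x₀ = x₀ := by
    intro s
    have hνs : μ (s : H) = (c : N) * ((s : H) • (c : N))⁻¹ := by
      have := congrArg Subtype.val (key2 s)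
      exact this
    calc (s : H) • (x' * (c : N)) = ((s : H) • x') * ((s : H) • (c : N)) := smul_mul' _ _ _
      _ = x' * μ (s : H) * ((s : H) • (c : N)) := by rw [hμs]
      _ = x' * ((c : N) * ((s : H) • (c : N))⁻¹) * ((s : H) • (c : N)) := by rw [hνs]
      _ = x' * (c : N) := by group
  have hmkc : (((c : N) : N ⧸ Z)) = 1 := (QuotientGroup.eq_one_iff _).mpr hcZ
  have hmkx₀ : ((x₀ : N ⧸ Z)) = xb := by
    rw [hx₀def]
    show ((QuotientGroup.mk' Z) (x' * (c : N))) = xb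
    rw [map_mul]
    show ((x' : N ⧸ Z)) * (((c : N) : N ⧸ Z)) = xb
    rw [hmkc, mul_one, hx']
  -- action on Z and the element z
  letI actZ : MulDistribMulAction H Z :=
    { smul := fun h z => ⟨h • (z : N), hZinv h _ z.2⟩
      one_smul := fun z => by ext; exact one_smul H (z : N)
      mul_smul := fun a b z => by ext; exact mul_smul a b (z : N)
      smul_mul := fun h a b => by ext; exact smul_mul' h (a : N) (b : N)
      smul_one := fun h => by ext; exact smul_one h }
  obtain ⟨z, hz⟩ := IH Z (hN.to_subgroup Z) hZlt
  have hzcoe : ∀ (h : H), ((h • z : Z) : N) = h • (z : N) := fun h => rfl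
  refine ⟨x₀ * (z : N), fun h => ⟨fun hfix => ?_, fun hall => hall _⟩⟩
  -- forward direction
  have hmkz : (((z : N) : N ⧸ Z)) = 1 := (QuotientGroup.eq_one_iff _).mpr z.2
  have hmkn₀ : (((x₀ * (z : N) : N) : N ⧸ Z)) = xb := by
    show ((QuotientGroup.mk' Z) (x₀ * (z : N))) = xb
    rw [map_mul]
    show ((x₀ : N ⧸ Z)) * (((z : N) : N ⧸ Z)) = xb
    rw [hmkz, mul_one, hmkx₀]
  have hxbfix : h • xb = xb := by
    rw [← hmkn₀, hact, hfix]
  have hhS : h ∈ S := (hSmem h).mpr ((hxb h).mp hxbfix)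
  have hx₀ : h • x₀ = x₀ := hx₀fix ⟨h, hhS⟩
  have hzfixN : h • (z : N) = (z : N) := by
    have h1 : (h • x₀) * (h • (z : N)) = x₀ * (z : N) := by
      rw [← smul_mul']
      exact hfix
    rw [hx₀] at h1
    exact mul_left_cancel h1
  have hZpt : ∀ w ∈ Z, h • w = w := by
    have hzfix : (h • z : Z) = z := Subtype.ext (by rw [hzcoe]; exact hzfixN)
    intro w hw
    exact congrArg Subtype.val ((hz h).mp hzfix ⟨w, hw⟩)
  -- Burnside-type argument: h acts trivially on N
  intro n
  set w : N := n⁻¹ * (h • n) with hwdef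
  have hwZ : w ∈ Z := by
    refine QuotientGroup.eq.mp ?_
    rw [← hact h n]
    exact ((hSmem h).mp hhS _).symm
  have hhn : h • n = n * w := (mul_inv_cancel_left _ _).symm
  have hwfix : h • w = w := hZpt w hwZ
  have hiter : ∀ j : ℕ, h ^ j • n = n * w ^ j := by
    intro j
    induction j with
    | zero => simp
    | succ j ihj =>
      rw [pow_succ', mul_smul, ihj, smul_mul', hhn, smul_pow', hwfix, pow_succ' w j]
      group
  have hword : w ^ orderOf h = 1 := by
    have h1 := hiter (orderOf h)
    rw [pow_orderOf_eq_one, one_smul] at h1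
    exact (left_eq_mul.mp h1)
  have hwp : w ^ p = 1 := hZp w hwZ
  have hdvd1 : orderOf w ∣ Nat.gcd (orderOf h) p :=
    Nat.dvd_gcd (orderOf_dvd_of_pow_eq_one hword) (orderOf_dvd_of_pow_eq_one hwp)
  have hco : Nat.Coprime (orderOf h) p :=
    Nat.Coprime.coprime_dvd_left (orderOf_dvd_natCard h) hH
  rw [Nat.Coprime] at hco
  rw [hco, Nat.dvd_one] at hdvd1
  have hw1 : w = 1 := orderOf_eq_one_iff.mp hdvd1
  rw [hhn, hw1, mul_one]



private lemma exists_pow_order_p {M : Type*} [Monoid M] {p : ℕ} :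
    ∀ (k : ℕ) (a : M), a ≠ 1 → a ^ p ^ k = 1 → ∃ j, a ^ p ^ j ≠ 1 ∧ (a ^ p ^ j) ^ p = 1 := by
  intro k
  induction k with
  | zero => intro a ha h; rw [pow_zero, pow_one] at h; exact absurd h ha
  | succ k ih =>
    intro a ha h
    by_cases hk : a ^ p ^ k = 1
    · exact ih a ha hk
    · exact ⟨k, hk, by rw [← pow_mul, ← pow_succ]; exact h⟩

private lemma aux {p : ℕ} (hp : p.Prime) {H : Type v} [CommGroup H] [Finite H]
    (hH : Nat.Coprime (Nat.card H) p) :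
    ∀ (n : ℕ) (N : Type u) [Group N] [Finite N] [MulDistribMulAction H N],
      IsPGroup p N → Nat.card N ≤ n →
      ∃ n₀ : N, ∀ h : H, h • n₀ = n₀ ↔ ∀ m : N, h • m = m := by
  intro n
  induction n with
  | zero =>
    intro N _ _ _ _ hle
    exact absurd hle (by have := Nat.card_pos (α := N); omega)
  | succ n ihn =>
    intro N _ _ _ hN hle
    by_cases htriv : ∀ (h : H) (m : N), h • m = m
    · exact ⟨1, fun h => ⟨fun _ => htriv h, fun _ => htriv h 1⟩⟩
    have hNnt : Nontrivial N := by
      by_contra hnt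
      rw [not_nontrivial_iff_subsingleton] at hnt
      exact htriv fun h m => Subsingleton.elim _ _
    have IH : ∀ (N' : Type u) [Group N'] [Finite N'] [MulDistribMulAction H N'],
        IsPGroup p N' → Nat.card N' < Nat.card N →
        ∃ n₀ : N', ∀ h : H, h • n₀ = n₀ ↔ ∀ m : N', h • m = m := by
      intro N' _ _ _ hN' hlt
      exact ihn N' hN' (by omega)
    by_cases hab : ∀ m : N, m ∈ Subgroup.center N ∧ m ^ p = 1
    · -- N is elementary abelian
      obtain ⟨v₁, hv₁⟩ := exists_ne (1 : N)
      set Z := Subgroup.closure (Set.range fun h : H => h • v₁) with hZdef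
      have hv₁Z : v₁ ∈ Z := Subgroup.subset_closure ⟨1, one_smul H v₁⟩
      have hZinv : ∀ (h : H), ∀ z ∈ Z, h • z ∈ Z := by
        intro h z hz
        induction hz using Subgroup.closure_induction with
        | mem x hx =>
          obtain ⟨h', rfl⟩ := hx
          exact Subgroup.subset_closure ⟨h * h', by simp [mul_smul]⟩
        | one => rw [smul_one]; exact Z.one_mem
        | mul a b _ _ ha hb => rw [smul_mul']; exact Z.mul_mem ha hb
        | inv a _ ha => rw [smul_inv']; exact Z.inv_mem ha
      by_cases hZtop : Z = ⊤
      · refine ⟨v₁, fun h => ⟨fun hfix m => ?_, fun hall => hall v₁⟩⟩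
        let F : Subgroup N :=
          { carrier := {m | h • m = m}
            one_mem' := smul_one h
            mul_mem' := fun {a b} ha hb => by
              show h • (a * b) = a * b
              rw [smul_mul', ha, hb]
            inv_mem' := fun {a} ha => by
              show h • a⁻¹ = a⁻¹
              rw [smul_inv']
              exact congrArg Inv.inv ha }
        have hZF : Z ≤ F := by
          rw [hZdef, Subgroup.closure_le]
          rintro x ⟨h', rfl⟩
          show h • (h' • v₁) = h' • v₁
          rw [smul_smul, mul_comm, ← smul_smul, hfix]
        have : m ∈ F := hZF (hZtop ▸ Subgroup.mem_top m)
        exact this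
      · have hZbot : Z ≠ ⊥ := by
          intro hbot
          rw [hbot, Subgroup.mem_bot] at hv₁Z
          exact hv₁ hv₁Z
        exact engine hp hH hN Z (fun z _ => (hab z).1) (fun z _ => (hab z).2)
          hZinv hZbot hZtop IH
    · -- general case : Z = Ω₁(Z(N))
      let Z : Subgroup N :=
        { carrier := {m | m ∈ Subgroup.center N ∧ m ^ p = 1}
          one_mem' := ⟨Subgroup.one_mem _, one_pow p⟩
          mul_mem' := fun {a b} ha hb => by
            refine ⟨Subgroup.mul_mem _ ha.1 hb.1, ?_⟩
            have hcomm : Commute a b := ((Subgroup.mem_center_iff.mp ha.1) b).symm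
            rw [hcomm.mul_pow, ha.2, hb.2, mul_one]
          inv_mem' := fun {a} ha => by
            refine ⟨Subgroup.inv_mem _ ha.1, ?_⟩
            rw [inv_pow, ha.2, inv_one] }
      have hZc : Z ≤ Subgroup.center N := fun z hz => hz.1
      have hZp : ∀ z ∈ Z, z ^ p = 1 := fun z hz => hz.2
      have hZinv : ∀ (h : H), ∀ z ∈ Z, h • z ∈ Z := by
        intro h z hz
        refine ⟨smul_mem_center h hz.1, ?_⟩
        rw [← smul_pow', hz.2, smul_one]
      have hZtop : Z ≠ ⊤ := by
        intro htop
        exact hab fun m => (htop ▸ Subgroup.mem_top m : m ∈ Z)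
      have hZbot : Z ≠ ⊥ := by
        haveI : Fact p.Prime := ⟨hp⟩
        haveI := hN.center_nontrivial
        obtain ⟨z₁, hz₁⟩ := exists_ne (1 : Subgroup.center N)
        have hz₁N : ((z₁ : N)) ≠ 1 := fun e => hz₁ (Subtype.ext e)
        obtain ⟨k, hk⟩ := hN (z₁ : N)
        obtain ⟨j, hj1, hjp⟩ := exists_pow_order_p k (z₁ : N) hz₁N hk
        intro hbot
        have hmem : ((z₁ : N)) ^ p ^ j ∈ Z :=
          ⟨Subgroup.pow_mem _ z₁.2 _, hjp⟩
        rw [hbot, Subgroup.mem_bot] at hmem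
        exact hj1 hmem
      exact engine hp hH hN Z hZc hZp hZinv hZbot hZtop IH

end Helpers

/-- If a finite abelian `p'`-group `H` acts on a finite `p`-group `N`, then
`C_H(n₀) = C_H(N)` for some `n₀ ∈ N`. -/
theorem stmt_1 {p : ℕ} (hp : p.Prime) (N : Type*) [Group N] [Finite N]
    (hN : IsPGroup p N) (H : Type*) [CommGroup H] [Finite H]
    (hH : Nat.Coprime (Nat.card H) p)
    [MulDistribMulAction H N] :
    ∃ n₀ : N, ∀ h : H, h • n₀ = n₀ ↔ ∀ n : N, h • n = n :=
  aux hp hH (Nat.card N) N hN le_rfl
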